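/- Concatenation of shortest 1-paths at a denominator maximum: if 1 = b₀/c₀ > b₁/c₁ > ⋯ > b_m/c_m > ⋯ > b_r/c_r = 0 is a sequence of rationals in lowest terms such that consecutive differences equal 1/(cᵢcᵢ₊₁), and the denominators satisfy c₀ < c₁ < ⋯ < c_m and c_m > c_{m+1} > ⋯ > c_r, then the subsequence from b₀/c₀ to b_m/c_m is the shortest 1-path from 1 to b_m/c_m and the subsequence from b_m/c_m to b_r/c_r is the shortest 1-path from b_m/c_m to 0. As a concrete instance, 1 > 1/2 > 2/5 > 3/8 and 3/8 > 1/3 > 0 are shortest 1-paths. -/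

import Mathlib

/-- A 1-path: a strictly decreasing list of rationals whose consecutive differences
are `1/(den * den)`. -/
def IsOnePath (l : List ℚ) : Prop :=
  l.Chain' fun p q => q < p ∧ p - q = 1 / ((p.den : ℚ) * (q.den : ℚ))

/-- A shortest 1-path: a 1-path no proper sublist of which, with the same endpoints,
is again a 1-path. -/
def IsShortestOnePath (l : List ℚ) : Prop :=
  IsOnePath l ∧ ∀ l' : List ℚ, l'.Sublist l → l' ≠ l →
    l'.head? = l.head? → l'.getLast? = l.getLast? → ¬ IsOnePath l'

/-- The step relation of a 1-path. -/
def Pstep (p q : ℚ) : Prop :=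
  q < p ∧ p - q = 1 / ((p.den : ℚ) * (q.den : ℚ))

lemma isOnePath_iff (l : List ℚ) : IsOnePath l ↔ l.Chain' Pstep := Iff.rfl

/-- No step of the relation can skip an element of `l`. -/
def NoSkip (l : List ℚ) : Prop :=
  ∀ i j (hi : i < l.length) (hj : j < l.length), i < j → Pstep l[i] l[j] → j = i + 1

lemma key : ∀ (l l' : List ℚ), l'.Sublist l → l.Chain' Pstep → l'.Chain' Pstep →
    l'.head? = l.head? → l'.getLast? = l.getLast? → NoSkip l → l' = l := by
  intro l
  induction l with
  | nil => intro l' hsub _ _ _ _ _; exact List.sublist_nil.mp hsub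
  | cons a l2 ih =>
    intro l' hsub hl hl' hh ht hns
    cases l' with
    | nil => simp at hh
    | cons x l'' =>
      have hx : a = x := by simpa using hh.symm
      subst hx
      have hsub2 : l''.Sublist l2 := List.cons_sublist_cons.mp hsub
      cases l'' with
      | nil =>
        cases l2 with
        | nil => rfl
        | cons c l3 =>
          exfalso
          have hgt : List.Pairwise (fun p q => q < p) (a :: c :: l3) :=
            List.isChain_iff_pairwise.mp (List.IsChain.imp (fun p q h => h.1) hl)
          have hmem : (c :: l3).getLast (by simp) ∈ c :: l3 := List.getLast_mem (by simp)
          have hlast : (c :: l3).getLast (by simp) < a :=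
            (List.pairwise_cons.mp hgt).1 _ hmem
          have hEq : a = (c :: l3).getLast (by simp) := by
            have : some a = (c :: l3).getLast? := by simpa using ht
            rw [List.getLast?_eq_getLast (by simp)] at this
            exact Option.some_injective _ this
          rw [← hEq] at hlast
          exact lt_irrefl _ hlast
      | cons b rest =>
        have hPab : Pstep a b := (List.isChain_cons_cons.mp hl').1
        have hb : b ∈ l2 := hsub2.subset (by simp)
        obtain ⟨j, hj, hbj⟩ := List.mem_iff_getElem.mp hb
        have hj1 : j + 1 = 0 + 1 := by
          refine hns 0 (j+1) (by simp) (by simp; omega) (by omega) ?_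
          simpa [hbj] using hPab
        have hj0 : j = 0 := by omega
        subst hj0
        cases l2 with
        | nil => simp at hj
        | cons c l3 =>
          have hcb : c = b := by simpa using hbj
          subst hcb
          have hl2 : c :: rest = c :: l3 := by
            refine ih (c :: rest) hsub2 (List.isChain_cons_cons.mp hl).2
              (List.isChain_cons_cons.mp hl').2 rfl (by simpa using ht) ?_
            intro i j hi hj hij hp
            have := hns (i+1) (j+1) (by simpa using hi) (by simpa using hj)
              (by omega) (by simpa using hp)
            omega
          rw [hl2]

lemma shortest_of (l : List ℚ) (h1 : l.Chain' Pstep) (h2 : NoSkip l) :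
    IsShortestOnePath l := by
  refine ⟨h1, ?_⟩
  intro l' hsub hne hh ht hl'
  exact hne (key l l' hsub h1 hl' hh ht h2)

theorem onePath_split_at_denominator_max (r m : ℕ) (hm : 0 < m) (hmr : m < r)
    (lam : ℕ → ℚ) (hfirst : lam 0 = 1) (hlast : lam r = 0)
    (hdiff : ∀ i < r, lam (i+1) < lam i ∧
      lam i - lam (i+1) = 1 / (((lam i).den : ℚ) * ((lam (i+1)).den : ℚ)))
    (hinc : ∀ i < m, (lam i).den < (lam (i+1)).den)
    (hdec : ∀ i, m ≤ i → i < r → (lam (i+1)).den < (lam i).den) :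
    IsShortestOnePath ((List.range (m + 1)).map lam) ∧
    IsShortestOnePath ((List.range (r - m + 1)).map fun i => lam (m + i)) ∧
    IsShortestOnePath ([1, 1/2, 2/5, 3/8] : List ℚ) ∧
    IsShortestOnePath ([3/8, 1/3, 0] : List ℚ) := by
  -- lam is strictly decreasing on [0, r]
  have hanti : ∀ j, j ≤ r → ∀ i, i < j → lam j < lam i := by
    intro j
    induction j with
    | zero => omega
    | succ n ihn =>
      intro hnr i hi
      have h1 : lam (n+1) < lam n := (hdiff n (by omega)).1
      rcases Nat.lt_or_ge i n with h | h
      · exact lt_trans h1 (ihn (by omega) i h)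
      · have : i = n := by omega
        rw [this]; exact h1
  -- denominators strictly increasing on [0, m]
  have hdinc : ∀ j, j ≤ m → ∀ i, i < j → (lam i).den < (lam j).den := by
    intro j
    induction j with
    | zero => omega
    | succ n ihn =>
      intro hnr i hi
      have h1 : (lam n).den < (lam (n+1)).den := hinc n (by omega)
      rcases Nat.lt_or_ge i n with h | h
      · exact lt_trans (ihn (by omega) i h) h1
      · have : i = n := by omega
        rw [this]; exact h1
  -- denominators strictly decreasing on [m, r]
  have hddec : ∀ j, j ≤ r → ∀ i, m ≤ i → i < j → (lam j).den < (lam i).den := by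
    intro j
    induction j with
    | zero => omega
    | succ n ihn =>
      intro hnr i him hi
      have h1 : (lam (n+1)).den < (lam n).den := hdec n (by omega) (by omega)
      rcases Nat.lt_or_ge i n with h | h
      · exact lt_trans h1 (ihn (by omega) i him h)
      · have : i = n := by omega
        rw [this]; exact h1
  have hdenpos : ∀ q : ℚ, (0:ℚ) < (q.den : ℚ) := by
    intro q; exact_mod_cast q.pos
  have d0 : ((0:ℚ)).den = 1 := by norm_num
  have d1 : ((1:ℚ)).den = 1 := by norm_num
  have d2 : ((1:ℚ)/2).den = 2 := by norm_num
  have d5 : ((2:ℚ)/5).den = 5 := by norm_num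
  have d8 : ((3:ℚ)/8).den = 8 := by norm_num
  have d3 : ((1:ℚ)/3).den = 3 := by norm_num
  constructor
  · -- first list
    apply shortest_of
    · rw [List.Chain', List.isChain_map, List.isChain_range_succ]
      intro i hi
      exact hdiff i (by omega)
    · intro i j hi hj hij hp
      simp only [List.length_map, List.length_range] at hi hj
      simp only [List.getElem_map, List.getElem_range] at hp
      by_contra hne
      have hij2 : i + 2 ≤ j := by omega
      obtain ⟨hlt, heq⟩ := hp
      have h1 : lam j < lam (i+1) := hanti j (by omega) (i+1) (by omega)
      have h2 : lam i - lam (i+1) = 1 / (((lam i).den:ℚ) * ((lam (i+1)).den:ℚ)) :=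
        (hdiff i (by omega)).2
      have h3 : ((lam (i+1)).den : ℚ) < ((lam j).den : ℚ) := by
        exact_mod_cast hdinc j (by omega) (i+1) (by omega)
      have h4 : ((lam i).den:ℚ) * ((lam (i+1)).den:ℚ) < ((lam i).den:ℚ) * ((lam j).den:ℚ) :=
        mul_lt_mul_of_pos_left h3 (hdenpos _)
      have h5 : 1 / (((lam i).den:ℚ) * ((lam j).den:ℚ)) <
          1 / (((lam i).den:ℚ) * ((lam (i+1)).den:ℚ)) :=
        one_div_lt_one_div_of_lt (by positivity) h4
      linarith
  refine ⟨?_, ?_, ?_⟩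
  · -- second list
    apply shortest_of
    · rw [List.Chain', List.isChain_map, List.isChain_range_succ]
      intro i hi
      exact hdiff (m + i) (by omega)
    · intro i j hi hj hij hp
      simp only [List.length_map, List.length_range] at hi hj
      simp only [List.getElem_map, List.getElem_range] at hp
      by_contra hne
      have hij2 : i + 2 ≤ j := by omega
      obtain ⟨hlt, heq⟩ := hp
      have h1 : lam (m+j-1) < lam (m+i) := hanti (m+j-1) (by omega) (m+i) (by omega)
      have h2 : lam (m+j-1) - lam (m+j) =
          1 / (((lam (m+j-1)).den:ℚ) * ((lam (m+j)).den:ℚ)) := by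
        have := (hdiff (m+j-1) (by omega)).2
        have he : m + j - 1 + 1 = m + j := by omega
        rwa [he] at this
      have h3 : ((lam (m+j-1)).den : ℚ) < ((lam (m+i)).den : ℚ) := by
        exact_mod_cast hddec (m+j-1) (by omega) (m+i) (by omega) (by omega)
      have h4 : ((lam (m+j-1)).den:ℚ) * ((lam (m+j)).den:ℚ) <
          ((lam (m+i)).den:ℚ) * ((lam (m+j)).den:ℚ) :=
        mul_lt_mul_of_pos_right h3 (hdenpos _)
      have h5 : 1 / (((lam (m+i)).den:ℚ) * ((lam (m+j)).den:ℚ)) <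
          1 / (((lam (m+j-1)).den:ℚ) * ((lam (m+j)).den:ℚ)) :=
        one_div_lt_one_div_of_lt (by positivity) h4
      linarith
  · -- [1, 1/2, 2/5, 3/8]
    apply shortest_of
    · simp only [List.Chain', List.isChain_cons_cons, List.isChain_singleton, Pstep, and_true]
      norm_num [d1, d2, d5, d8]
    · intro i j hi hj hij hp
      simp only [List.length_cons, List.length_nil] at hi hj
      interval_cases i <;> interval_cases j <;>
        first
          | rfl
          | (exfalso
             obtain ⟨hp1, hp2⟩ := hp
             simp only [List.getElem_cons_zero, List.getElem_cons_succ,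
               d0, d1, d2, d5, d8, d3] at hp2
             norm_num at hp2)
  · -- [3/8, 1/3, 0]
    apply shortest_of
    · simp only [List.Chain', List.isChain_cons_cons, List.isChain_singleton, Pstep, and_true]
      norm_num [d0, d3, d8]
    · intro i j hi hj hij hp
      simp only [List.length_cons, List.length_nil] at hi hj
      interval_cases i <;> interval_cases j <;>
        first
          | rfl
          | (exfalso
             obtain ⟨hp1, hp2⟩ := hp
             simp only [List.getElem_cons_zero, List.getElem_cons_succ,
               d0, d1, d2, d5, d8, d3] at hp2
             norm_num at hp2)
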